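/- arXiv:2409.18681 — 3 statements merged into one kernel-verified Lean document; each statement's English description precedes it below -/
import Mathlib

section
/- Let N, M be positive integers, let μ, ν : Fin N → ℂ, let a, b : Fin N → ℂ with |a_i| = 1 and |b_i| = 1 for all i, and suppose there is a permutation σ of Fin N with ν_i = μ_{σ(i)} for all i. Define the N×M complex matrices Φ_f and Φ_g by (Φ_f)_{i,n} = a_i μ_i^{n+1} and (Φ_g)_{i,n} = b_i ν_i^{n+1} (for n = 0,…,M−1), and let Λ_f = diag(μ), Λ_g = diag(ν). Then there exists a unitary N×N complex matrix C such that Φ_g = C Φ_f and C* Λ_g C = Λ_f. -/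
open Matrix

theorem stmt_3 (N M : ℕ) (hN : 0 < N) (hM : 0 < M)
    (μ ν : Fin N → ℂ) (a b : Fin N → ℂ)
    (ha : ∀ i, ‖a i‖ = 1) (hb : ∀ i, ‖b i‖ = 1)
    (σ : Equiv.Perm (Fin N)) (hσ : ∀ i, ν i = μ (σ i))
    (Φf Φg : Matrix (Fin N) (Fin M) ℂ)
    (hΦf : ∀ i n, Φf i n = a i * μ i ^ ((n : ℕ) + 1))
    (hΦg : ∀ i n, Φg i n = b i * ν i ^ ((n : ℕ) + 1))
    (Λf Λg : Matrix (Fin N) (Fin N) ℂ)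
    (hΛf : Λf = Matrix.diagonal μ) (hΛg : Λg = Matrix.diagonal ν) :
    ∃ C ∈ Matrix.unitaryGroup (Fin N) ℂ,
      Φg = C * Φf ∧ Cᴴ * Λg * C = Λf := by
  have key : ∀ z : ℂ, ‖z‖ = 1 → z * star z = 1 := by
    intro z hz
    rw [RCLike.star_def, Complex.mul_conj, Complex.normSq_eq_norm_sq, hz]
    norm_num
  set c : Fin N → ℂ := fun i => b i * star (a (σ i)) with hc
  have habs : ∀ i, ‖c i‖ = 1 := by
    intro i
    rw [hc]
    rw [RCLike.star_def, norm_mul, Complex.norm_conj, ha, hb, mul_one]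
  have hcu : ∀ i, c i * star (c i) = 1 := fun i => key _ (habs i)
  have hcu' : ∀ i, c i * (starRingEnd ℂ) (c i) = 1 := hcu
  set C : Matrix (Fin N) (Fin N) ℂ := Matrix.of fun i j => if j = σ i then c i else 0 with hC
  refine ⟨C, ?_, ?_, ?_⟩
  · rw [Matrix.mem_unitaryGroup_iff]
    ext i j
    simp only [Matrix.mul_apply, Matrix.one_apply, star_apply, conjTranspose_apply, hC,
      Matrix.of_apply]
    rw [Finset.sum_eq_single (σ i)]
    · by_cases h : i = j
      · subst h; simp [hcu' i]
      · have : ¬ σ i = σ j := fun hh => h (σ.injective hh)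
        simp [h, this]
    · intro k _ hk
      simp [hk]
    · simp
  · ext i n
    rw [hΦg, Matrix.mul_apply, Finset.sum_eq_single (σ i)]
    · simp only [hC, Matrix.of_apply, if_pos rfl, hΦf, hσ]
      have h2 := key (a (σ i)) (ha (σ i))
      calc b i * μ (σ i) ^ ((n : ℕ) + 1)
          = (a (σ i) * star (a (σ i))) * (b i * μ (σ i) ^ ((n : ℕ) + 1)) := by
            rw [h2, one_mul]
        _ = b i * star (a (σ i)) * (a (σ i) * μ (σ i) ^ ((n : ℕ) + 1)) := by ring
    · intro k _ hk
      simp [hC, hk]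
    · simp
  · rw [hΛf, hΛg]
    ext j k
    rw [show Cᴴ * Matrix.diagonal ν * C = (Cᴴ * Matrix.diagonal ν) * C from rfl,
      Matrix.mul_apply]
    simp only [Matrix.mul_diagonal, conjTranspose_apply, hC, Matrix.of_apply,
      Matrix.diagonal_apply]
    rw [Finset.sum_eq_single (σ.symm j)]
    · simp only [Equiv.apply_symm_apply, if_pos rfl]
      by_cases h : j = k
      · subst h
        rw [if_pos rfl, if_pos rfl]
        have h2 := hcu (σ.symm j)
        rw [hσ]
        simp only [Equiv.apply_symm_apply]
        calc star (c (σ.symm j)) * μ j * c (σ.symm j)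
            = (c (σ.symm j) * star (c (σ.symm j))) * μ j := by ring
          _ = μ j := by rw [h2, one_mul]
      · have h2 : ¬ k = j := fun hh => h hh.symm
        rw [if_neg h2, if_neg h, mul_zero]
    · intro l _ hl
      have : ¬ j = σ l := fun hh => hl (by rw [hh]; simp)
      rw [if_neg this, star_zero, zero_mul, zero_mul]
    · simp
end

section
/- Let a, b be positive real numbers. Then the mean distance to the origin over the rectangle [0,a] × [0,b], namely (1/(ab)) ∫₀^a ∫₀^b sqrt(x² + y²) dy dx, equals A(2a, 2b), where A(Δ₁, Δ₂) = [Δ₂³ · arsinh(Δ₁/Δ₂) + Δ₁³ · arsinh(Δ₂/Δ₁) + 2 Δ₁ Δ₂ sqrt(Δ₁² + Δ₂²)] / (12 Δ₁ Δ₂). -/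
lemma my_arsinh_le_self {t : ℝ} (ht : 0 ≤ t) : Real.arsinh t ≤ t :=
  calc Real.arsinh t ≤ Real.arsinh (Real.sinh t) :=
        Real.arsinh_le_arsinh.2 (Real.self_le_sinh_iff.2 ht)
    _ = t := Real.arsinh_sinh t

lemma my_sqrt_one_add (x y : ℝ) (hx : 0 < x) :
    Real.sqrt (1 + (y/x)^2) = Real.sqrt (x^2+y^2) / x := by
  rw [show 1 + (y/x)^2 = (x^2+y^2)/x^2 by field_simp,
    Real.sqrt_div (by positivity), Real.sqrt_sq hx.le]

lemma my_hda1 (x y : ℝ) (hx : 0 < x) :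
    HasDerivAt (fun y => Real.arsinh (y/x)) (Real.sqrt (x^2+y^2))⁻¹ y := by
  have h := (Real.hasDerivAt_arsinh (y/x)).comp y ((hasDerivAt_id y).div_const x)
  refine h.congr_deriv (Eq.symm ?_)
  rw [my_sqrt_one_add x y hx]
  have hs : Real.sqrt (x^2+y^2) ≠ 0 := by positivity
  field_simp

lemma my_hds (x y : ℝ) (hx : 0 < x) :
    HasDerivAt (fun y => Real.sqrt (x^2+y^2)) (y / Real.sqrt (x^2+y^2)) y := by
  have h1 : HasDerivAt (fun y : ℝ => x^2 + y^2) (2*y) y := by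
    simpa using (hasDerivAt_pow 2 y).const_add (x^2)
  have h := (Real.hasDerivAt_sqrt (by positivity : x^2+y^2 ≠ 0)).comp y h1
  refine h.congr_deriv (Eq.symm ?_)
  ring

lemma my_hdF (x y : ℝ) (hx : 0 < x) :
    HasDerivAt (fun y => (y * Real.sqrt (x^2+y^2) + x^2 * Real.arsinh (y/x)) / 2)
      (Real.sqrt (x^2+y^2)) y := by
  have h := (((hasDerivAt_id y).mul (my_hds x y hx)).add
    ((my_hda1 x y hx).const_mul (x^2))).div_const 2
  refine h.congr_deriv (Eq.symm ?_)
  have hs : (0:ℝ) < Real.sqrt (x^2+y^2) := by positivity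
  have h2 : Real.sqrt (x^2+y^2) * Real.sqrt (x^2+y^2) = x^2+y^2 :=
    Real.mul_self_sqrt (by positivity)
  field_simp
  simp only [id]
  nlinarith [h2]

lemma my_inner_eq (x b : ℝ) (hx : 0 < x) :
    (∫ y in (0:ℝ)..b, Real.sqrt (x^2+y^2))
      = (b * Real.sqrt (x^2+b^2) + x^2 * Real.arsinh (b/x)) / 2 := by
  have := intervalIntegral.integral_eq_sub_of_hasDerivAt
    (f := fun y => (y * Real.sqrt (x^2+y^2) + x^2 * Real.arsinh (y/x)) / 2)
    (fun y _ => my_hdF x y hx)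
    (Continuous.intervalIntegrable (by continuity) 0 b)
  simpa using this

lemma my_hda2 (b x : ℝ) (hx : 0 < x) :
    HasDerivAt (fun x => Real.arsinh (b/x)) (-(b / (x * Real.sqrt (x^2+b^2)))) x := by
  have hdiv : HasDerivAt (fun x : ℝ => b/x) (-(b/x^2)) x := by
    simpa [div_eq_mul_inv, mul_comm] using (hasDerivAt_inv hx.ne').const_mul b
  have h := (Real.hasDerivAt_arsinh (b/x)).comp x hdiv
  refine h.congr_deriv (Eq.symm ?_)
  rw [my_sqrt_one_add x b hx]
  have hs : Real.sqrt (x^2+b^2) ≠ 0 := by positivity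
  field_simp

lemma my_hdG (b x : ℝ) (hb : 0 < b) (hx : 0 < x) :
    HasDerivAt (fun x => (x^3 * Real.arsinh (b/x) + b^3 * Real.arsinh (x/b)
        + 2*x*b*Real.sqrt (x^2+b^2)) / 6)
      ((b * Real.sqrt (x^2+b^2) + x^2 * Real.arsinh (b/x)) / 2) x := by
  have harsx : HasDerivAt (fun x => Real.arsinh (x/b)) (Real.sqrt (x^2+b^2))⁻¹ x := by
    have h := (Real.hasDerivAt_arsinh (x/b)).comp x ((hasDerivAt_id x).div_const b)
    refine h.congr_deriv (Eq.symm ?_)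
    rw [my_sqrt_one_add b x hb, add_comm (b^2)]
    have : Real.sqrt (x^2+b^2) ≠ 0 := by positivity
    field_simp
  have hsq : HasDerivAt (fun x => Real.sqrt (x^2+b^2)) (x / Real.sqrt (x^2+b^2)) x := by
    have h1 : HasDerivAt (fun x : ℝ => x^2 + b^2) (2*x) x := by
      simpa using (hasDerivAt_pow 2 x).add_const (b^2)
    have h := (Real.hasDerivAt_sqrt (by positivity : x^2+b^2 ≠ 0)).comp x h1
    refine h.congr_deriv (Eq.symm ?_); ring
  have h1 : HasDerivAt (fun x : ℝ => x^3) (3*x^2) x := by simpa using hasDerivAt_pow 3 x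
  have h2 : HasDerivAt (fun x : ℝ => 2*x*b) (2*b) x := by
    simpa using ((hasDerivAt_id x).const_mul 2).mul_const b
  have h := (((h1.mul (my_hda2 b x hx)).add (harsx.const_mul (b^3))).add
    (h2.mul hsq)).div_const 6
  refine h.congr_deriv (Eq.symm ?_)
  have hs : (0:ℝ) < Real.sqrt (x^2+b^2) := by positivity
  have hm : Real.sqrt (x^2+b^2) * Real.sqrt (x^2+b^2) = x^2+b^2 :=
    Real.mul_self_sqrt (by positivity)
  set s := Real.sqrt (x^2+b^2) with hsdef
  field_simp
  linear_combination (2*b) * hm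

lemma my_contOn (b : ℝ) (hb : 0 < b) :
    ContinuousOn (fun x => x^2 * Real.arsinh (b/x)) (Set.Ici 0) := by
  intro t ht
  rcases eq_or_lt_of_le (Set.mem_Ici.mp ht) with h0 | h0
  · have hf0 : (fun x => x^2 * Real.arsinh (b/x)) 0 = 0 := by simp
    rw [← h0]
    unfold ContinuousWithinAt
    rw [hf0]
    apply squeeze_zero'
      (g := fun x : ℝ => b * x)
    · filter_upwards [self_mem_nhdsWithin] with x (hx : x ∈ Set.Ici (0:ℝ))
      have h1 : 0 ≤ b / x := div_nonneg hb.le hx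
      exact mul_nonneg (by positivity) (Real.arsinh_nonneg_iff.2 h1)
    · filter_upwards [self_mem_nhdsWithin] with x (hx : x ∈ Set.Ici (0:ℝ))
      rcases eq_or_lt_of_le (Set.mem_Ici.mp hx) with h1 | h1
      · simp [← h1]
      · have harz : Real.arsinh (b/x) ≤ b/x := my_arsinh_le_self (by positivity)
        calc x^2 * Real.arsinh (b/x) ≤ x^2 * (b/x) := by nlinarith
          _ = b * x := by field_simp
    · have : Filter.Tendsto (fun x : ℝ => b * x) (nhds 0) (nhds (b * 0)) :=
        (continuous_const.mul continuous_id).tendsto 0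
      simpa using this.mono_left nhdsWithin_le_nhds
  · exact (((continuous_pow 2).continuousAt).mul
      (Real.continuous_arsinh.continuousAt.comp
        (continuousAt_const.div continuousAt_id h0.ne'))).continuousWithinAt

/-- The function A(Δ₁, Δ₂) from Theorem 2 of the paper. -/
noncomputable def paretoA (Δ₁ Δ₂ : ℝ) : ℝ :=
  (Δ₂ ^ 3 * Real.arsinh (Δ₁ / Δ₂) + Δ₁ ^ 3 * Real.arsinh (Δ₂ / Δ₁) +
      2 * Δ₁ * Δ₂ * Real.sqrt (Δ₁ ^ 2 + Δ₂ ^ 2)) / (12 * Δ₁ * Δ₂)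

theorem stmt_8 (a b : ℝ) (ha : 0 < a) (hb : 0 < b) :
    (1 / (a * b)) * ∫ x in (0:ℝ)..a, ∫ y in (0:ℝ)..b, Real.sqrt (x ^ 2 + y ^ 2)
      = paretoA (2 * a) (2 * b) := by
  set g : ℝ → ℝ := fun x => (b * Real.sqrt (x^2+b^2) + x^2 * Real.arsinh (b/x)) / 2 with hgdef
  set G : ℝ → ℝ := fun x => (x^3 * Real.arsinh (b/x) + b^3 * Real.arsinh (x/b)
      + 2*x*b*Real.sqrt (x^2+b^2)) / 6 with hGdef
  have hcong : (∫ x in (0:ℝ)..a, ∫ y in (0:ℝ)..b, Real.sqrt (x ^ 2 + y ^ 2))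
      = ∫ x in (0:ℝ)..a, g x := by
    apply intervalIntegral.integral_congr_ae
    apply MeasureTheory.ae_of_all
    intro x hx
    rw [Set.uIoc_of_le ha.le] at hx
    exact my_inner_eq x b hx.1
  have hg_cont : ContinuousOn g (Set.Icc 0 a) := by
    apply ContinuousOn.div_const
    apply ContinuousOn.add
    · exact (continuous_const.mul (by continuity)).continuousOn
    · exact (my_contOn b hb).mono (fun x hx => hx.1)
  have hG_cont : ContinuousOn G (Set.Icc 0 a) := by
    apply ContinuousOn.div_const
    apply ContinuousOn.add
    apply ContinuousOn.add
    · have : (fun x : ℝ => x^3 * Real.arsinh (b/x))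
          = fun x => x * (x^2 * Real.arsinh (b/x)) := by funext x; ring
      rw [this]
      exact (continuousOn_id.mul (my_contOn b hb)).mono (fun x hx => hx.1)
    · exact (continuous_const.mul
        (Real.continuous_arsinh.comp (continuous_id.div_const b))).continuousOn
    · exact ((by continuity : Continuous fun x : ℝ => 2*x*b).mul (by continuity)).continuousOn
  have hftc : (∫ x in (0:ℝ)..a, g x) = G a - G 0 := by
    apply intervalIntegral.integral_eq_sub_of_hasDeriv_right_of_le ha.le hG_cont
    · intro x hx
      exact (my_hdG b x hb hx.1).hasDerivWithinAt
    · apply ContinuousOn.intervalIntegrable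
      rwa [Set.uIcc_of_le ha.le]
  have hG0 : G 0 = 0 := by simp [hGdef]
  rw [hcong, hftc, hG0, sub_zero]
  have hsq : Real.sqrt ((2*a)^2 + (2*b)^2) = 2 * Real.sqrt (a^2+b^2) := by
    rw [show (2*a)^2 + (2*b)^2 = 2^2 * (a^2+b^2) by ring,
      Real.sqrt_mul (by positivity), Real.sqrt_sq (by norm_num)]
  have hd1 : (2*a)/(2*b) = a/b := mul_div_mul_left a b two_ne_zero
  have hd2 : (2*b)/(2*a) = b/a := mul_div_mul_left b a two_ne_zero
  rw [paretoA, hsq, hd1, hd2, hGdef]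
  field_simp
  ring
end

section
/- Let 0 < x₁ < x₂ and 0 < y₁ < y₂ be real numbers. Then the mean distance to the origin over the rectangle [x₁,x₂] × [y₁,y₂], namely (1/((x₂−x₁)(y₂−y₁))) ∫_{x₁}^{x₂} ∫_{y₁}^{y₂} sqrt(x² + y²) dy dx, equals [x₂y₂·A(2x₂,2y₂) − x₂y₁·A(2y₁,2x₂) − x₁y₂·A(2y₂,2x₁) + x₁y₁·A(2x₁,2y₁)] / [x₂y₂ − x₂y₁ − x₁y₂ + x₁y₁], where A(Δ₁, Δ₂) = [Δ₂³ · arsinh(Δ₁/Δ₂) + Δ₁³ · arsinh(Δ₂/Δ₁) + 2 Δ₁ Δ₂ sqrt(Δ₁² + Δ₂²)] / (12 Δ₁ Δ₂). -/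
open Real

lemma sqrt_one_add_div_sq' {a : ℝ} (ha : 0 < a) (b : ℝ) :
    Real.sqrt (1 + (b / a) ^ 2) = Real.sqrt (a ^ 2 + b ^ 2) / a := by
  rw [show 1 + (b / a) ^ 2 = (a ^ 2 + b ^ 2) / a ^ 2 by field_simp,
    Real.sqrt_div (by positivity), Real.sqrt_sq ha.le]

noncomputable def paretoG (x y : ℝ) : ℝ :=
  (y ^ 3 * Real.arsinh (x / y) + x ^ 3 * Real.arsinh (y / x)) / 6 +
    x * y * Real.sqrt (x ^ 2 + y ^ 2) / 3

noncomputable def paretog (x y : ℝ) : ℝ :=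
  (y * Real.sqrt (x ^ 2 + y ^ 2) + x ^ 2 * Real.arsinh (y / x)) / 2

lemma paretoG_comm (x y : ℝ) : paretoG x y = paretoG y x := by
  unfold paretoG
  rw [show x ^ 2 + y ^ 2 = y ^ 2 + x ^ 2 by ring]
  ring

lemma hasDerivAt_g {x : ℝ} (hx : 0 < x) (y : ℝ) :
    HasDerivAt (fun y => paretog x y) (Real.sqrt (x ^ 2 + y ^ 2)) y := by
  have hS : 0 < x ^ 2 + y ^ 2 := by positivity
  have hsS : 0 < Real.sqrt (x ^ 2 + y ^ 2) := Real.sqrt_pos.mpr hS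
  have hsqrt : HasDerivAt (fun y : ℝ => Real.sqrt (x ^ 2 + y ^ 2))
      (2 * y / (2 * Real.sqrt (x ^ 2 + y ^ 2))) y := by
    have h1 : HasDerivAt (fun y : ℝ => x ^ 2 + y ^ 2) (2 * y) y := by
      simpa using ((hasDerivAt_pow 2 y).const_add (x ^ 2))
    exact (Real.hasDerivAt_sqrt hS.ne').comp y h1 |>.congr_deriv (by ring)
  have harsinh : HasDerivAt (fun y : ℝ => Real.arsinh (y / x))
      ((Real.sqrt (1 + (y / x) ^ 2))⁻¹ * (1 / x)) y :=
    (Real.hasDerivAt_arsinh _).comp y ((hasDerivAt_id y).div_const x)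
  have h := (((hasDerivAt_id y).mul hsqrt).add (harsinh.const_mul (x ^ 2))).div_const 2
  have hs : Real.sqrt (x ^ 2 + y ^ 2) * Real.sqrt (x ^ 2 + y ^ 2) = x ^ 2 + y ^ 2 :=
    Real.mul_self_sqrt hS.le
  have e : (1 * Real.sqrt (x ^ 2 + y ^ 2) + id y * (2 * y / (2 * Real.sqrt (x ^ 2 + y ^ 2))) +
      x ^ 2 * ((Real.sqrt (1 + (y / x) ^ 2))⁻¹ * (1 / x))) / 2 = Real.sqrt (x ^ 2 + y ^ 2) := by
    rw [sqrt_one_add_div_sq' hx]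
    field_simp
    simp only [id]
    linear_combination (-1) * hs
  simpa [paretog] using h.congr_deriv e

lemma hasDerivAt_G {y : ℝ} (hy : 0 < y) {x : ℝ} (hx : 0 < x) :
    HasDerivAt (fun x => paretoG x y) (paretog x y) x := by
  have hS : 0 < x ^ 2 + y ^ 2 := by positivity
  have hsS : 0 < Real.sqrt (x ^ 2 + y ^ 2) := Real.sqrt_pos.mpr hS
  have hsqrt : HasDerivAt (fun x : ℝ => Real.sqrt (x ^ 2 + y ^ 2))
      (2 * x / (2 * Real.sqrt (x ^ 2 + y ^ 2))) x := by
    have h1 : HasDerivAt (fun x : ℝ => x ^ 2 + y ^ 2) (2 * x) x := by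
      simpa using ((hasDerivAt_pow 2 x).add_const (y ^ 2))
    exact (Real.hasDerivAt_sqrt hS.ne').comp x h1 |>.congr_deriv (by ring)
  have hA1 : HasDerivAt (fun x : ℝ => Real.arsinh (x / y))
      ((Real.sqrt (1 + (x / y) ^ 2))⁻¹ * (1 / y)) x :=
    (Real.hasDerivAt_arsinh _).comp x ((hasDerivAt_id x).div_const y)
  have hdivx : HasDerivAt (fun x : ℝ => y / x) ((0 * x - y * 1) / x ^ 2) x :=
    (hasDerivAt_const x y).div (hasDerivAt_id x) hx.ne'
  have hA2 : HasDerivAt (fun x : ℝ => Real.arsinh (y / x))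
      ((Real.sqrt (1 + (y / x) ^ 2))⁻¹ * ((0 * x - y * 1) / x ^ 2)) x :=
    (Real.hasDerivAt_arsinh _).comp x hdivx
  have h :=
    ((((hA1.const_mul (y ^ 3)).add ((hasDerivAt_pow 3 x).mul hA2)).div_const 6).add
      ((((hasDerivAt_id x).mul_const y).mul hsqrt).div_const 3))
  refine h.congr_deriv ?_
  rw [sqrt_one_add_div_sq' hx, sqrt_one_add_div_sq' hy]
  have hs : Real.sqrt (x ^ 2 + y ^ 2) * Real.sqrt (x ^ 2 + y ^ 2) = x ^ 2 + y ^ 2 :=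
    Real.mul_self_sqrt hS.le
  unfold paretog
  rw [show y ^ 2 + x ^ 2 = x ^ 2 + y ^ 2 by ring]
  field_simp
  simp only [id]
  norm_num
  linear_combination (-6 * y) * hs

lemma ab_paretoA {a b : ℝ} (ha : 0 < a) (hb : 0 < b) :
    a * b * paretoA (2 * a) (2 * b) = paretoG a b := by
  unfold paretoA paretoG
  rw [show (2 * a) / (2 * b) = a / b by rw [mul_div_mul_left a b two_ne_zero],
    show (2 * b) / (2 * a) = b / a by rw [mul_div_mul_left b a two_ne_zero],
    show (2 * a) ^ 2 + (2 * b) ^ 2 = 2 ^ 2 * (a ^ 2 + b ^ 2) by ring,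
    Real.sqrt_mul (by positivity), Real.sqrt_sq (by norm_num : (0:ℝ) ≤ 2)]
  field_simp
  ring

lemma inner_integral {x : ℝ} (hx : 0 < x) (y₁ y₂ : ℝ) :
    ∫ y in y₁..y₂, Real.sqrt (x ^ 2 + y ^ 2) = paretog x y₂ - paretog x y₁ := by
  refine intervalIntegral.integral_eq_sub_of_hasDerivAt (fun y _ => hasDerivAt_g hx y) ?_
  exact (Real.continuous_sqrt.comp (by continuity)).intervalIntegrable _ _

theorem stmt_9 (x₁ x₂ y₁ y₂ : ℝ)
    (hx₁ : 0 < x₁) (hx : x₁ < x₂) (hy₁ : 0 < y₁) (hy : y₁ < y₂) :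
    (1 / ((x₂ - x₁) * (y₂ - y₁))) *
        ∫ x in x₁..x₂, ∫ y in y₁..y₂, Real.sqrt (x ^ 2 + y ^ 2)
      = (x₂ * y₂ * paretoA (2 * x₂) (2 * y₂) - x₂ * y₁ * paretoA (2 * y₁) (2 * x₂)
          - x₁ * y₂ * paretoA (2 * y₂) (2 * x₁) + x₁ * y₁ * paretoA (2 * x₁) (2 * y₁))
        / (x₂ * y₂ - x₂ * y₁ - x₁ * y₂ + x₁ * y₁) := by
  have hx₂ : 0 < x₂ := hx₁.trans hx
  have hy₂ : 0 < y₂ := hy₁.trans hy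
  have hxpos : ∀ x ∈ Set.uIcc x₁ x₂, 0 < x := by
    intro x hxm
    rw [Set.uIcc_of_le hx.le] at hxm
    linarith [hxm.1]
  have hcongr : (∫ x in x₁..x₂, ∫ y in y₁..y₂, Real.sqrt (x ^ 2 + y ^ 2))
      = ∫ x in x₁..x₂, (paretog x y₂ - paretog x y₁) := by
    refine intervalIntegral.integral_congr fun x hxm => ?_
    exact inner_integral (hxpos x hxm) y₁ y₂
  have hco : ContinuousOn (fun x => paretog x y₂ - paretog x y₁) (Set.uIcc x₁ x₂) := by
    have hne : ∀ x ∈ Set.uIcc x₁ x₂, x ≠ 0 := fun x hxm => (hxpos x hxm).ne'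
    unfold paretog
    refine ContinuousOn.sub ?_ ?_ <;>
      exact ContinuousOn.div_const
        (((continuousOn_const.mul ((Real.continuous_sqrt.comp (by continuity)).continuousOn)).add
          (((continuousOn_id.pow 2)).mul (Real.continuous_arsinh.comp_continuousOn
            (continuousOn_const.div continuousOn_id hne))))) 2
  have heval : (∫ x in x₁..x₂, (paretog x y₂ - paretog x y₁))
      = (paretoG x₂ y₂ - paretoG x₂ y₁) - (paretoG x₁ y₂ - paretoG x₁ y₁) := by
    refine intervalIntegral.integral_eq_sub_of_hasDerivAt
      (f := fun x => paretoG x y₂ - paretoG x y₁) (fun x hxm => ?_) hco.intervalIntegrable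
    exact (hasDerivAt_G hy₂ (hxpos x hxm)).sub (hasDerivAt_G hy₁ (hxpos x hxm))
  rw [hcongr, heval]
  have h11 : x₁ * y₁ * paretoA (2 * x₁) (2 * y₁) = paretoG x₁ y₁ := ab_paretoA hx₁ hy₁
  have h22 : x₂ * y₂ * paretoA (2 * x₂) (2 * y₂) = paretoG x₂ y₂ := ab_paretoA hx₂ hy₂
  have h21 : x₂ * y₁ * paretoA (2 * y₁) (2 * x₂) = paretoG x₂ y₁ := by
    rw [mul_comm x₂ y₁, ab_paretoA hy₁ hx₂, paretoG_comm]
  have h12 : x₁ * y₂ * paretoA (2 * y₂) (2 * x₁) = paretoG x₁ y₂ := by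
    rw [mul_comm x₁ y₂, ab_paretoA hy₂ hx₁, paretoG_comm]
  rw [h11, h22, h21, h12,
    show x₂ * y₂ - x₂ * y₁ - x₁ * y₂ + x₁ * y₁ = (x₂ - x₁) * (y₂ - y₁) by ring]
  have hd : (x₂ - x₁) * (y₂ - y₁) ≠ 0 :=
    ne_of_gt (mul_pos (by linarith) (by linarith))
  field_simp
  ring
end
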